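/- The sequent calculus PLL for the propositional lax logic, obtained from LJ by adding the rule ◇L (from Γ, A ⇒ B infer Γ, ◇A ⇒ ◇B) and the axioms p → ◇p and ◇◇p → ◇p, has the Visser–Harrop property; in particular it has the disjunction property: if PLL proves (⇒ C ∨ D) then PLL proves (⇒ C) or PLL proves (⇒ D). -/

import Mathlib

set_option autoImplicit false

namespace UPT

/-- Modal formulas over atoms of type `α` (the language `ℒ = {∧,∨,→,⊤,⊥,□,◇}`). -/
inductive Fml (α : Type) : Type where
  | atom : α → Fml α
  | top  : Fml α
  | bot  : Fml α
  | and  : Fml α → Fml α → Fml α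
  | or   : Fml α → Fml α → Fml α
  | imp  : Fml α → Fml α → Fml α
  | box  : Fml α → Fml α
  | dia  : Fml α → Fml α
deriving DecidableEq

variable {α β : Type}

/-- Simultaneous substitution of formulas for atoms. -/
def Fml.subst (σ : β → Fml α) : Fml β → Fml α
  | .atom b  => σ b
  | .top     => .top
  | .bot     => .bot
  | .and A B => .and (A.subst σ) (B.subst σ)
  | .or A B  => .or (A.subst σ) (B.subst σ)
  | .imp A B => .imp (A.subst σ) (B.subst σ)
  | .box A   => .box (A.subst σ)
  | .dia A   => .dia (A.subst σ)

/-- A sequent: a finite multiset antecedent together with a succedent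
containing at most one formula. -/
abbrev Seq (α : Type) : Type := Multiset (Fml α) × Option (Fml α)

/-- A rule set relates a (finite) list of premise sequents to a conclusion sequent. -/
abbrev RuleSet (α : Type) : Type := List (Seq α) → Seq α → Prop

/-- The axioms and rules of the single-conclusion sequent calculus `LJ`, stated
schematically: they are closed under substituting arbitrary formulas for atoms
and arbitrary multisets (resp. succedents) for the context variables. -/
inductive LJRule : List (Seq α) → Seq α → Prop where
  | id (Γ : Multiset (Fml α)) (A : Fml α) : LJRule [] (A ::ₘ Γ, some A)
  | botL (Γ : Multiset (Fml α)) (Δ : Option (Fml α)) : LJRule [] (.bot ::ₘ Γ, Δ)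
  | topR (Γ : Multiset (Fml α)) : LJRule [] (Γ, some .top)
  | wL (A : Fml α) (Γ : Multiset (Fml α)) (Δ : Option (Fml α)) :
      LJRule [(Γ, Δ)] (A ::ₘ Γ, Δ)
  | wR (A : Fml α) (Γ : Multiset (Fml α)) : LJRule [(Γ, none)] (Γ, some A)
  | cL (A : Fml α) (Γ : Multiset (Fml α)) (Δ : Option (Fml α)) :
      LJRule [(A ::ₘ A ::ₘ Γ, Δ)] (A ::ₘ Γ, Δ)
  | cut (A : Fml α) (Γ : Multiset (Fml α)) (Δ : Option (Fml α)) :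
      LJRule [(Γ, some A), (A ::ₘ Γ, Δ)] (Γ, Δ)
  | andL₁ (A B : Fml α) (Γ : Multiset (Fml α)) (Δ : Option (Fml α)) :
      LJRule [(A ::ₘ Γ, Δ)] (.and A B ::ₘ Γ, Δ)
  | andL₂ (A B : Fml α) (Γ : Multiset (Fml α)) (Δ : Option (Fml α)) :
      LJRule [(B ::ₘ Γ, Δ)] (.and A B ::ₘ Γ, Δ)
  | andR (A B : Fml α) (Γ : Multiset (Fml α)) :
      LJRule [(Γ, some A), (Γ, some B)] (Γ, some (.and A B))
  | orL (A B : Fml α) (Γ : Multiset (Fml α)) (Δ : Option (Fml α)) :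
      LJRule [(A ::ₘ Γ, Δ), (B ::ₘ Γ, Δ)] (.or A B ::ₘ Γ, Δ)
  | orR₁ (A B : Fml α) (Γ : Multiset (Fml α)) : LJRule [(Γ, some A)] (Γ, some (.or A B))
  | orR₂ (A B : Fml α) (Γ : Multiset (Fml α)) : LJRule [(Γ, some B)] (Γ, some (.or A B))
  | impL (A B : Fml α) (Γ : Multiset (Fml α)) (Δ : Option (Fml α)) :
      LJRule [(Γ, some A), (B ::ₘ Γ, Δ)] (.imp A B ::ₘ Γ, Δ)
  | impR (A B : Fml α) (Γ : Multiset (Fml α)) :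
      LJRule [(A ::ₘ Γ, some B)] (Γ, some (.imp A B))

/-- The rule `K_□`: from `Γ ⇒ A` infer `□Γ ⇒ □A`. -/
inductive KBoxRule : List (Seq α) → Seq α → Prop where
  | mk (Γ : Multiset (Fml α)) (A : Fml α) :
      KBoxRule [(Γ, some A)] (Γ.map Fml.box, some (.box A))

/-- The rule `K_◇`: from `Γ, A ⇒ B` infer `□Γ, ◇A ⇒ ◇B`. -/
inductive KDiaRule : List (Seq α) → Seq α → Prop where
  | mk (Γ : Multiset (Fml α)) (A B : Fml α) :
      KDiaRule [(A ::ₘ Γ, some B)] (.dia A ::ₘ Γ.map Fml.box, some (.dia B))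

/-- The rule `◇L`: from `Γ, A ⇒ B` infer `Γ, ◇A ⇒ ◇B`. -/
inductive DiaLRule : List (Seq α) → Seq α → Prop where
  | mk (Γ : Multiset (Fml α)) (A B : Fml α) :
      DiaLRule [(A ::ₘ Γ, some B)] (.dia A ::ₘ Γ, some (.dia B))

/-- Adding a set `Ax` of axioms to a calculus: the initial sequents `⇒ σ(A)`
for every substitution instance `σ(A)` of every `A ∈ Ax`. -/
def axRule (Ax : Fml α → Prop) : RuleSet α := fun ps c =>
  ps = [] ∧ ∃ (A : Fml α) (σ : α → Fml α), Ax A ∧ c = ((0 : Multiset (Fml α)), some (A.subst σ))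

/-- Using a set of sequents as additional initial sequents (assumptions). -/
def hypRule (H : Set (Seq α)) : RuleSet α := fun ps c => ps = [] ∧ c ∈ H

/-- The sequent calculus `LJ+Ax`. -/
def LJSys (Ax : Fml α → Prop) : RuleSet α := fun ps c => LJRule ps c ∨ axRule Ax ps c

/-- The sequent calculus `CK+Ax = LJ + K_□ + K_◇ + Ax`. -/
def CKSys (Ax : Fml α → Prop) : RuleSet α := fun ps c =>
  LJRule ps c ∨ KBoxRule ps c ∨ KDiaRule ps c ∨ axRule Ax ps c

/-- The sequent calculus `CK_□+Ax = LJ + K_□ + Ax`. -/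
def CKBoxSys (Ax : Fml α → Prop) : RuleSet α := fun ps c =>
  LJRule ps c ∨ KBoxRule ps c ∨ axRule Ax ps c

/-- The sequent calculus `BLL+Ax = LJ + ◇L + Ax`. -/
def BLLSys (Ax : Fml α → Prop) : RuleSet α := fun ps c =>
  LJRule ps c ∨ DiaLRule ps c ∨ axRule Ax ps c

/-- Provability of a sequent in the calculus generated by a rule set. -/
inductive Derives (R : RuleSet α) : Multiset (Fml α) → Option (Fml α) → Prop where
  | step {ps : List (Seq α)} {c : Seq α} (hr : R ps c)
      (hp : ∀ p ∈ ps, Derives R p.1 p.2) : Derives R c.1 c.2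

/-- Basic formulas: generated from atoms, `⊤`, `⊥` by `∧`, `∨`, `◇`. -/
inductive Basic : Fml α → Prop where
  | atom (a : α) : Basic (.atom a)
  | top : Basic (.top : Fml α)
  | bot : Basic (.bot : Fml α)
  | and {A B : Fml α} : Basic A → Basic B → Basic (.and A B)
  | or {A B : Fml α} : Basic A → Basic B → Basic (.or A B)
  | dia {A : Fml α} : Basic A → Basic (.dia A)

/-- Almost positive formulas: generated from basic formulas by `∧`, `∨`, `□`, `◇`
and implications `A → B` with `A` basic and `B` almost positive. -/
inductive AlmostPos : Fml α → Prop where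
  | basic {A : Fml α} : Basic A → AlmostPos A
  | and {A B : Fml α} : AlmostPos A → AlmostPos B → AlmostPos (.and A B)
  | or {A B : Fml α} : AlmostPos A → AlmostPos B → AlmostPos (.or A B)
  | box {A : Fml α} : AlmostPos A → AlmostPos (.box A)
  | dia {A : Fml α} : AlmostPos A → AlmostPos (.dia A)
  | imp {A B : Fml α} : Basic A → AlmostPos B → AlmostPos (.imp A B)

/-- Constructive formulas: generated from basic formulas by `∧`, `□` and
implications `A → B` with `A` almost positive and `B` constructive. -/
inductive Constructive : Fml α → Prop where
  | basic {A : Fml α} : Basic A → Constructive A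
  | and {A B : Fml α} : Constructive A → Constructive B → Constructive (.and A B)
  | box {A : Fml α} : Constructive A → Constructive (.box A)
  | imp {A B : Fml α} : AlmostPos A → Constructive B → Constructive (.imp A B)

/-- Harrop formulas: atoms, `⊥`, `⊤`, closed under `∧`, `□`, and implications
`A → B` with `A` arbitrary and `B` Harrop. -/
inductive Harrop : Fml α → Prop where
  | atom (a : α) : Harrop (.atom a)
  | top : Harrop (.top : Fml α)
  | bot : Harrop (.bot : Fml α)
  | and {A B : Fml α} : Harrop A → Harrop B → Harrop (.and A B)
  | box {A : Fml α} : Harrop A → Harrop (.box A)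
  | imp (A : Fml α) {B : Fml α} : Harrop B → Harrop (.imp A B)

/-- Conjunction of a list of formulas (`⋀∅ = ⊤`). -/
def conj : List (Fml α) → Fml α
  | [] => .top
  | [A] => A
  | A :: B :: l => .and A (conj (B :: l))

/-- Disjunction of a list of formulas (`⋁∅ = ⊥`). -/
def disj : List (Fml α) → Fml α
  | [] => .bot
  | [A] => A
  | A :: B :: l => .or A (disj (B :: l))

/-- Disjunction of a succedent (at most one formula; `⋁∅ = ⊥`). -/
def odisj : Option (Fml α) → Fml α
  | none => .bot
  | some A => A

/-- The multiset `{A_i → B_i}_{i ∈ I}` of implications of an indexed family. -/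
def imps (AB : List (Fml α × Fml α)) : Multiset (Fml α) :=
  ↑(AB.map fun p => Fml.imp p.1 p.2)

/-- The conjunction `⋀_{i∈I} (A_i → B_i)` of an indexed family of implications. -/
def impConj (AB : List (Fml α × Fml α)) : Fml α :=
  conj (AB.map fun p => Fml.imp p.1 p.2)

/-- Truth in the one-node *irreflexive* frame `𝒦ᵢ` under a Boolean valuation:
`□A` is always true and `◇A` is always false; the propositional connectives
are evaluated classically. -/
def evalI (v : α → Bool) : Fml α → Bool
  | .atom a  => v a
  | .top     => true
  | .bot     => false
  | .and A B => evalI v A && evalI v B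
  | .or A B  => evalI v A || evalI v B
  | .imp A B => !evalI v A || evalI v B
  | .box _   => true
  | .dia _   => false

/-- Truth in the one-node *reflexive* frame `𝒦ᵣ` under a Boolean valuation:
`□A` and `◇A` take the value of `A`. -/
def evalR (v : α → Bool) : Fml α → Bool
  | .atom a  => v a
  | .top     => true
  | .bot     => false
  | .and A B => evalR v A && evalR v B
  | .or A B  => evalR v A || evalR v B
  | .imp A B => !evalR v A || evalR v B
  | .box A   => evalR v A
  | .dia A   => evalR v A

/-- Validity of a sequent with respect to a one-node semantics: under every
valuation, if all formulas of the antecedent are true then so is the succedent. -/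
def SeqValid (ev : (α → Bool) → Fml α → Bool) (Γ : Multiset (Fml α)) (Δ : Option (Fml α)) :
    Prop :=
  ∀ v : α → Bool, (∀ A ∈ Γ, ev v A = true) → ∃ B ∈ Δ, ev v B = true

/-- `CK+Ax` is T-free: every provable sequent is valid in the irreflexive node frame. -/
def TFree (Ax : Fml α → Prop) : Prop :=
  ∀ (Γ : Multiset (Fml α)) (Δ : Option (Fml α)), Derives (CKSys Ax) Γ Δ → SeqValid evalI Γ Δ

/-- `CK+Ax` is T-full: every provable sequent is valid in the reflexive node
frame and the calculus proves `⇒ □p → p` and `⇒ p → ◇p`. -/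
def TFull (Ax : Fml α → Prop) : Prop :=
  (∀ (Γ : Multiset (Fml α)) (Δ : Option (Fml α)), Derives (CKSys Ax) Γ Δ → SeqValid evalR Γ Δ) ∧
  (∀ a : α, Derives (CKSys Ax) 0 (some (.imp (.box (.atom a)) (.atom a)))) ∧
  (∀ a : α, Derives (CKSys Ax) 0 (some (.imp (.atom a) (.dia (.atom a)))))

/-- Classical validity of a (modality-free) sequent: `⋀Γ → ⋁Δ` is true under
every Boolean valuation of the atoms. -/
def ClValid (Γ : Multiset (Fml α)) (Δ : Option (Fml α)) : Prop :=
  ∀ v : α → Bool, (∀ A ∈ Γ, evalI v A = true) → ∃ B ∈ Δ, evalI v B = true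

/-- Nonempty conjunctions of atoms. -/
inductive AtomConj : Fml α → Prop where
  | single (a : α) : AtomConj (.atom a)
  | and {A B : Fml α} : AtomConj A → AtomConj B → AtomConj (.and A B)

/-- Implicational Horn formulas: `⊥`, atoms, and implications `⋀Q → r` with `Q`
a nonempty multiset of atoms and `r` an atom or `⊥`. -/
inductive ImpHorn : Fml α → Prop where
  | bot : ImpHorn (.bot : Fml α)
  | atom (a : α) : ImpHorn (.atom a)
  | impAtom {A : Fml α} (hA : AtomConj A) (a : α) : ImpHorn (.imp A (.atom a))
  | impBot {A : Fml α} (hA : AtomConj A) : ImpHorn (.imp A .bot)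

/-- Formulas of the form `◇^n p` with `p` an atom and `n ≥ 0`. -/
inductive DiaPowAtom : Fml α → Prop where
  | atom (a : α) : DiaPowAtom (.atom a)
  | dia {A : Fml α} : DiaPowAtom A → DiaPowAtom (.dia A)

/-- Nonempty conjunctions `⋀_{i=1}^k ◇^{n_i} p_i` of formulas `◇^{n_i} p_i`. -/
inductive DiaConj : Fml α → Prop where
  | single {A : Fml α} : DiaPowAtom A → DiaConj A
  | and {A B : Fml α} : DiaConj A → DiaConj B → DiaConj (.and A B)

/-- Modal Horn formulas: `⊥` and atoms, closed under `□` and under implications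
`A → B` with `A = ⋀_{i=1}^k ◇^{n_i} p_i` and `B` modal Horn. -/
inductive ModalHorn : Fml α → Prop where
  | bot : ModalHorn (.bot : Fml α)
  | atom (a : α) : ModalHorn (.atom a)
  | box {A : Fml α} : ModalHorn A → ModalHorn (.box A)
  | imp {A B : Fml α} : DiaConj A → ModalHorn B → ModalHorn (.imp A B)

/-- The predicate "all atoms of the formula satisfy `P`". -/
def Fml.AtomsIn (P : α → Prop) : Fml α → Prop
  | .atom a  => P a
  | .top     => True
  | .bot     => True
  | .and A B => A.AtomsIn P ∧ B.AtomsIn P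
  | .or A B  => A.AtomsIn P ∧ B.AtomsIn P
  | .imp A B => A.AtomsIn P ∧ B.AtomsIn P
  | .box A   => A.AtomsIn P
  | .dia A   => A.AtomsIn P

/-- No `◇` occurs in the formula. -/
def Fml.DiaFree : Fml α → Prop
  | .atom _  => True
  | .top     => True
  | .bot     => True
  | .and A B => A.DiaFree ∧ B.DiaFree
  | .or A B  => A.DiaFree ∧ B.DiaFree
  | .imp A B => A.DiaFree ∧ B.DiaFree
  | .box A   => A.DiaFree
  | .dia _   => False

/-- No `□` occurs in the formula. -/
def Fml.BoxFree : Fml α → Prop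
  | .atom _  => True
  | .top     => True
  | .bot     => True
  | .and A B => A.BoxFree ∧ B.BoxFree
  | .or A B  => A.BoxFree ∧ B.BoxFree
  | .imp A B => A.BoxFree ∧ B.BoxFree
  | .box _   => False
  | .dia A   => A.BoxFree

/-- The formula is modality-free (propositional). -/
def Fml.ModFree : Fml α → Prop
  | .atom _  => True
  | .top     => True
  | .bot     => True
  | .and A B => A.ModFree ∧ B.ModFree
  | .or A B  => A.ModFree ∧ B.ModFree
  | .imp A B => A.ModFree ∧ B.ModFree
  | .box _   => False
  | .dia _   => False

/-- An angling of the language: an injection `φ ↦ ⟨φ⟩` from formulas into the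
atoms whose image (the angled atoms) is disjoint from a fixed infinite set of
plain atoms. -/
structure Angling (α : Type) where
  angle : Fml α → α
  plain : Set α
  inj : Function.Injective angle
  plain_infinite : plain.Infinite
  disjoint : ∀ φ : Fml α, angle φ ∉ plain

/-- `a` is an angled atom. -/
def Angling.Angled (S : Angling α) (a : α) : Prop := ∃ φ : Fml α, S.angle φ = a

/-- The translation `t`: `⊥^t = ⊥`, `p^t = ⟨p⟩`, `⊤^t = ⟨⊤⟩`,
`(A ∘ B)^t = (A^t ∘ B^t) ∧ ⟨A ∘ B⟩` and `(○A)^t = (○A^t) ∧ ⟨○A⟩`. -/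
def Angling.tr (S : Angling α) : Fml α → Fml α
  | .atom a  => .atom (S.angle (.atom a))
  | .top     => .atom (S.angle .top)
  | .bot     => .bot
  | .and A B => .and (.and (S.tr A) (S.tr B)) (.atom (S.angle (.and A B)))
  | .or A B  => .and (.or (S.tr A) (S.tr B)) (.atom (S.angle (.or A B)))
  | .imp A B => .and (.imp (S.tr A) (S.tr B)) (.atom (S.angle (.imp A B)))
  | .box A   => .and (.box (S.tr A)) (.atom (S.angle (.box A)))
  | .dia A   => .and (.dia (S.tr A)) (.atom (S.angle (.dia A)))

/-- Action of the standard substitution on atoms: an angled atom `⟨φ⟩` is sent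
to `φ`; plain atoms are fixed. -/
noncomputable def Angling.stdAtom (S : Angling α) (a : α) : Fml α :=
  haveI := Classical.propDecidable (∃ φ : Fml α, S.angle φ = a)
  if h : ∃ φ : Fml α, S.angle φ = a then h.choose else .atom a

/-- The standard substitution `s`: replaces each angled atom `⟨φ⟩` by `φ`,
fixes the plain atoms, and commutes with all connectives. -/
noncomputable def Angling.std (S : Angling α) : Fml α → Fml α :=
  Fml.subst S.stdAtom

/-- The Visser–Harrop property of a calculus. -/
def VisserHarrop (R : RuleSet α) : Prop :=
  ∀ (Γ : Multiset (Fml α)), (∀ A ∈ Γ, Harrop A) →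
  ∀ (AB : List (Fml α × Fml α)) (C D : Fml α),
    Derives R (Γ + imps AB) (some (.or C D)) →
    Derives R (Γ + imps AB) (some C) ∨
    Derives R (Γ + imps AB) (some D) ∨
    ∃ p ∈ AB, Derives R (Γ + imps AB) (some p.1)

/-- The disjunction property of a calculus. -/
def DisjProp (R : RuleSet α) : Prop :=
  ∀ C D : Fml α, Derives R 0 (some (.or C D)) →
    Derives R 0 (some C) ∨ Derives R 0 (some D)

/-- The formula interpretation `I(Γ ⇒ Δ) = ⋀Γ → ⋁Δ` belongs to `L` (stated for
every enumeration of the antecedent multiset as a list). -/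
def interpIn (L : Set (Fml α)) (s : Seq α) : Prop :=
  ∀ l : List (Fml α), (↑l : Multiset (Fml α)) = s.1 → Fml.imp (conj l) (odisj s.2) ∈ L

/- Named modal axioms (with `p := atom 0`, `q := atom 1`). -/
def axTa : Fml ℕ := .imp (.box (.atom 0)) (.atom 0)
def axTb : Fml ℕ := .imp (.atom 0) (.dia (.atom 0))
def axBa : Fml ℕ := .imp (.dia (.box (.atom 0))) (.atom 0)
def axBb : Fml ℕ := .imp (.atom 0) (.box (.dia (.atom 0)))
def ax4a : Fml ℕ := .imp (.box (.atom 0)) (.box (.box (.atom 0)))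
def ax4b : Fml ℕ := .imp (.dia (.dia (.atom 0))) (.dia (.atom 0))
def ax5a : Fml ℕ := .imp (.dia (.box (.atom 0))) (.box (.atom 0))
def ax5b : Fml ℕ := .imp (.dia (.atom 0)) (.box (.dia (.atom 0)))
def axDiaBot : Fml ℕ := .imp (.dia .bot) .bot
def axDiaOr : Fml ℕ :=
  .imp (.dia (.or (.atom 0) (.atom 1))) (.or (.dia (.atom 0)) (.dia (.atom 1)))
def axBoxImp : Fml ℕ :=
  .imp (.imp (.dia (.atom 0)) (.box (.atom 1))) (.box (.imp (.atom 0) (.atom 1)))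

/-- The axioms of `X ⊆ {T, B, 4, 5}` in both their `a`- and `b`-versions. -/
def XAxioms (tT tB t4 t5 : Bool) : Set (Fml ℕ) :=
  (if tT then ({axTa, axTb} : Set (Fml ℕ)) else ∅) ∪
  (if tB then ({axBa, axBb} : Set (Fml ℕ)) else ∅) ∪
  (if t4 then ({ax4a, ax4b} : Set (Fml ℕ)) else ∅) ∪
  (if t5 then ({ax5a, ax5b} : Set (Fml ℕ)) else ∅)

/-- The additional axioms of `IK` over `CK`. -/
def IKExtra : Set (Fml ℕ) := {axDiaBot, axDiaOr, axBoxImp}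

/-- The right rule with premises `{Γ, φ̄_i ⇒ ψ̄_i}_{i∈I}` and conclusion
`Γ, θ̄ ⇒ η̄`, closed under all substitutions of formulas for atoms and
multisets for the context `Γ`. -/
def rightRuleInst (prems : List (List (Fml α) × Option (Fml α)))
    (θ : List (Fml α)) (η : Option (Fml α)) : RuleSet α := fun ps c =>
  ∃ (σ : α → Fml α) (Γ : Multiset (Fml α)),
    ps = prems.map (fun pr =>
        ((Γ + ↑(pr.1.map (Fml.subst σ)) : Multiset (Fml α)), pr.2.map (Fml.subst σ))) ∧
    c = ((Γ + ↑(θ.map (Fml.subst σ)) : Multiset (Fml α)), η.map (Fml.subst σ))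

/-- The left rule with premises `{Γ, φ̄_i ⇒ ψ̄_i}_{i∈I} ∪ {Γ, θ̄_j ⇒ Δ}_{j∈J}`
and conclusion `Γ, η̄ ⇒ Δ`, closed under all substitutions of formulas for
atoms and multisets for `Γ` and `Δ`. -/
def leftRuleInst (prems : List (List (Fml α) × Option (Fml α)))
    (lefts : List (List (Fml α))) (η : List (Fml α)) : RuleSet α := fun ps c =>
  ∃ (σ : α → Fml α) (Γ : Multiset (Fml α)) (Δ : Option (Fml α)),
    ps = prems.map (fun pr =>
          ((Γ + ↑(pr.1.map (Fml.subst σ)) : Multiset (Fml α)), pr.2.map (Fml.subst σ)))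
        ++ lefts.map (fun θj => ((Γ + ↑(θj.map (Fml.subst σ)) : Multiset (Fml α)), Δ)) ∧
    c = ((Γ + ↑(η.map (Fml.subst σ)) : Multiset (Fml α)), Δ)

/-- The formula `Ax_R` of a right rule. -/
def AxRight (prems : List (List (Fml α) × Option (Fml α)))
    (θ : List (Fml α)) (η : Option (Fml α)) : Fml α :=
  .imp (.and (conj (prems.map fun pr => .imp (conj pr.1) (odisj pr.2))) (conj θ)) (odisj η)

/-- The formula `Ax_R` of a left rule. -/
def AxLeft (prems : List (List (Fml α) × Option (Fml α)))
    (lefts : List (List (Fml α))) (η : List (Fml α)) : Fml α :=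
  .imp (.and (conj (prems.map fun pr => .imp (conj pr.1) (odisj pr.2))) (conj η))
    (disj (lefts.map conj))

/-- The forgetful translation `f_i`: fixes atoms, `⊤`, `⊥`, commutes with
`∧`, `∨`, `→`, `□`, and sends every `◇A` to `⊥`. -/
def fi : Fml α → Fml α
  | .atom a  => .atom a
  | .top     => .top
  | .bot     => .bot
  | .and A B => .and (fi A) (fi B)
  | .or A B  => .or (fi A) (fi B)
  | .imp A B => .imp (fi A) (fi B)
  | .box A   => .box (fi A)
  | .dia _   => .bot

/-- The forgetful translation `f_r`: fixes atoms, `⊤`, `⊥`, commutes with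
`∧`, `∨`, `→`, `□`, and sends `◇A` to `f_r A`. -/
def fr : Fml α → Fml α
  | .atom a  => .atom a
  | .top     => .top
  | .bot     => .bot
  | .and A B => .and (fr A) (fr B)
  | .or A B  => .or (fr A) (fr B)
  | .imp A B => .imp (fr A) (fr B)
  | .box A   => .box (fr A)
  | .dia A   => fr A


/-- The axioms of the propositional lax logic: `p → ◇p` and `◇◇p → ◇p`. -/
def PLLAx : Fml ℕ → Prop := fun A => A = axTb ∨ A = ax4b


namespace VH

abbrev R0 : RuleSet ℕ := BLLSys PLLAx

lemma lj {ps : List (Seq ℕ)} {c : Seq ℕ} (h : LJRule ps c)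
    (hp : ∀ p ∈ ps, Derives R0 p.1 p.2) : Derives R0 c.1 c.2 :=
  .step (Or.inl h) hp

lemma weaken {Γ : Multiset (Fml ℕ)} {Δ : Option (Fml ℕ)} (S : Multiset (Fml ℕ))
    (h : Derives R0 Γ Δ) : Derives R0 (S + Γ) Δ := by
  induction S using Multiset.induction with
  | empty => simpa using h
  | cons a s ih =>
    rw [Multiset.cons_add]
    exact lj (LJRule.wL a (s + Γ) Δ) (by
      intro p hp; simp only [List.mem_singleton] at hp; subst hp; exact ih)

lemma cutD {Γ : Multiset (Fml ℕ)} {Δ : Option (Fml ℕ)} {A : Fml ℕ}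
    (h1 : Derives R0 Γ (some A)) (h2 : Derives R0 (A ::ₘ Γ) Δ) : Derives R0 Γ Δ := by
  refine lj (LJRule.cut A Γ Δ) ?_
  intro p hp
  simp only [List.mem_cons, List.mem_singleton, List.not_mem_nil, or_false] at hp
  rcases hp with rfl | rfl
  · exact h1
  · exact h2

lemma derOf {Γ : Multiset (Fml ℕ)} {A : Fml ℕ} (h : A ∈ Γ) : Derives R0 Γ (some A) := by
  have := lj (LJRule.id (Γ.erase A) A) (by simp)
  rwa [Multiset.cons_erase h] at this

lemma multicut {Δ : Option (Fml ℕ)} :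
    ∀ (S : Multiset (Fml ℕ)) {Γ : Multiset (Fml ℕ)}, Derives R0 (Γ + S) Δ →
      (∀ θ ∈ S, Derives R0 Γ (some θ)) → Derives R0 Γ Δ := by
  intro S
  induction S using Multiset.induction with
  | empty => intro Γ h _; simpa using h
  | cons a s ih =>
    intro Γ h hs
    have ha : Derives R0 (Γ + s) (some a) := by
      have := weaken s (hs a (Multiset.mem_cons_self _ _))
      rwa [add_comm] at this
    have h' : Derives R0 (a ::ₘ (Γ + s)) Δ := by
      rwa [show Γ + (a ::ₘ s) = a ::ₘ (Γ + s) by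
        rw [add_comm, Multiset.cons_add, add_comm]] at h
    exact ih (cutD ha h') (fun θ hθ => hs θ (Multiset.mem_cons_of_mem hθ))

lemma multicut' {S Γ : Multiset (Fml ℕ)} {Δ : Option (Fml ℕ)}
    (h : Derives R0 S Δ) (hs : ∀ θ ∈ S, Derives R0 Γ (some θ)) : Derives R0 Γ Δ :=
  multicut S (weaken Γ h) hs

lemma mpD {Γ : Multiset (Fml ℕ)} {A B : Fml ℕ}
    (h1 : Derives R0 Γ (some (.imp A B))) (h2 : Derives R0 Γ (some A)) :
    Derives R0 Γ (some B) := by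
  refine cutD h1 (lj (LJRule.impL A B Γ (some B)) ?_)
  intro p hp
  simp only [List.mem_cons, List.mem_singleton, List.not_mem_nil, or_false] at hp
  rcases hp with rfl | rfl
  · exact h2
  · exact lj (LJRule.id Γ B) (by simp)

lemma andE1 {Γ : Multiset (Fml ℕ)} {A B : Fml ℕ}
    (h : Derives R0 Γ (some (.and A B))) : Derives R0 Γ (some A) := by
  refine cutD h (lj (LJRule.andL₁ A B Γ (some A)) ?_)
  intro p hp
  simp only [List.mem_singleton] at hp; subst hp
  exact lj (LJRule.id Γ A) (by simp)

lemma andE2 {Γ : Multiset (Fml ℕ)} {A B : Fml ℕ}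
    (h : Derives R0 Γ (some (.and A B))) : Derives R0 Γ (some B) := by
  refine cutD h (lj (LJRule.andL₂ A B Γ (some B)) ?_)
  intro p hp
  simp only [List.mem_singleton] at hp; subst hp
  exact lj (LJRule.id Γ B) (by simp)

lemma exfalso_der {Γ : Multiset (Fml ℕ)} {Δ : Option (Fml ℕ)}
    (h : Derives R0 Γ (some .bot)) : Derives R0 Γ Δ :=
  cutD h (lj (LJRule.botL Γ Δ) (by simp))

lemma axTb_der (A : Fml ℕ) (Γ : Multiset (Fml ℕ)) :
    Derives R0 Γ (some (.imp A (.dia A))) := by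
  have h0 : Derives R0 (0 : Multiset (Fml ℕ)) (some (.imp A (.dia A))) :=
    .step (c := ((0 : Multiset (Fml ℕ)), some (.imp A (.dia A))))
      (Or.inr (Or.inr ⟨rfl, axTb, fun _ => A, Or.inl rfl, by simp [axTb, Fml.subst]⟩))
      (by simp)
  simpa using weaken Γ h0

lemma ax4b_der (A : Fml ℕ) (Γ : Multiset (Fml ℕ)) :
    Derives R0 Γ (some (.imp (.dia (.dia A)) (.dia A))) := by
  have h0 : Derives R0 (0 : Multiset (Fml ℕ)) (some (.imp (.dia (.dia A)) (.dia A))) :=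
    .step (c := ((0 : Multiset (Fml ℕ)), some (.imp (.dia (.dia A)) (.dia A))))
      (Or.inr (Or.inr ⟨rfl, ax4b, fun _ => A, Or.inr rfl, by simp [ax4b, Fml.subst]⟩))
      (by simp)
  simpa using weaken Γ h0

/-- The Aczel slash relative to a fixed context `Γ`. -/
def Slash (Γ : Multiset (Fml ℕ)) : Fml ℕ → Prop
  | .atom a  => Derives R0 Γ (some (.atom a))
  | .top     => True
  | .bot     => Derives R0 Γ (some .bot)
  | .and A B => Slash Γ A ∧ Slash Γ B
  | .or A B  => Slash Γ A ∨ Slash Γ B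
  | .imp A B => Derives R0 Γ (some (.imp A B)) ∧ (Slash Γ A → Slash Γ B)
  | .box A   => Derives R0 Γ (some (.box A))
  | .dia A   => Derives R0 Γ (some (.dia A))

def SlashO (Γ : Multiset (Fml ℕ)) : Option (Fml ℕ) → Prop
  | none => Derives R0 Γ (some .bot)
  | some A => Slash Γ A

lemma slash_der {Γ : Multiset (Fml ℕ)} : ∀ {A : Fml ℕ}, Slash Γ A → Derives R0 Γ (some A)
  | .atom _, h => h
  | .top, _ => lj (LJRule.topR Γ) (by simp)
  | .bot, h => h
  | .and A B, h => by
    refine lj (LJRule.andR A B Γ) ?_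
    intro p hp
    simp only [List.mem_cons, List.mem_singleton, List.not_mem_nil, or_false] at hp
    rcases hp with rfl | rfl
    · exact slash_der h.1
    · exact slash_der h.2
  | .or A B, h => by
    rcases h with h | h
    · exact lj (LJRule.orR₁ A B Γ) (by
        intro p hp; simp only [List.mem_singleton] at hp; subst hp; exact slash_der h)
    · exact lj (LJRule.orR₂ A B Γ) (by
        intro p hp; simp only [List.mem_singleton] at hp; subst hp; exact slash_der h)
  | .imp _ _, h => h.1
  | .box _, h => h
  | .dia _, h => h

lemma exfalso_slash {Γ : Multiset (Fml ℕ)} (hb : Derives R0 Γ (some .bot)) :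
    ∀ (A : Fml ℕ), Slash Γ A
  | .atom a => exfalso_der hb
  | .top => trivial
  | .bot => hb
  | .and A B => ⟨exfalso_slash hb A, exfalso_slash hb B⟩
  | .or A B => Or.inl (exfalso_slash hb A)
  | .imp A B => ⟨exfalso_der hb, fun _ => exfalso_slash hb B⟩
  | .box A => exfalso_der hb
  | .dia A => exfalso_der hb

lemma harrop_slash {Γ : Multiset (Fml ℕ)} {A : Fml ℕ} (hH : Harrop A)
    (hd : Derives R0 Γ (some A)) : Slash Γ A := by
  induction hH with
  | atom a => exact hd
  | top => trivial
  | bot => exact hd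
  | and h1 h2 ih1 ih2 => exact ⟨ih1 (andE1 hd), ih2 (andE2 hd)⟩
  | box h ih => exact hd
  | imp A h ih => exact ⟨hd, fun hA => ih (mpD hd (slash_der hA))⟩

lemma slash_sound {S : Multiset (Fml ℕ)} {Δ : Option (Fml ℕ)} (h : Derives R0 S Δ) :
    ∀ (Γ : Multiset (Fml ℕ)), (∀ A ∈ S, Slash Γ A) → SlashO Γ Δ := by
  induction h with
  | @step ps c hr hp ih =>
    intro Γ hs
    rcases hr with hr | hr | hr
    · cases hr with
      | id Γ' A => exact hs A (Multiset.mem_cons_self _ _)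
      | botL Γ' Δ =>
        have hb : Derives R0 Γ (some .bot) := hs _ (Multiset.mem_cons_self _ _)
        cases Δ with
        | none => exact hb
        | some B => exact exfalso_slash hb B
      | topR Γ' => trivial
      | wL A Γ' Δ =>
        exact ih (Γ', Δ) (by simp) Γ (fun X hX => hs X (Multiset.mem_cons_of_mem hX))
      | wR A Γ' =>
        exact exfalso_slash (ih (Γ', none) (by simp) Γ hs) A
      | cL A Γ' Δ =>
        refine ih (A ::ₘ A ::ₘ Γ', Δ) (by simp) Γ ?_
        intro X hX
        rcases Multiset.mem_cons.mp hX with rfl | hX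
        · exact hs X (Multiset.mem_cons_self _ _)
        · exact hs X hX
      | cut A Γ' Δ =>
        have hA : Slash Γ A := ih (Γ', some A) (by simp) Γ hs
        refine ih (A ::ₘ Γ', Δ) (by simp) Γ ?_
        intro X hX
        rcases Multiset.mem_cons.mp hX with rfl | hX
        · exact hA
        · exact hs X hX
      | andL₁ A B Γ' Δ =>
        refine ih (A ::ₘ Γ', Δ) (by simp) Γ ?_
        intro X hX
        rcases Multiset.mem_cons.mp hX with rfl | hX
        · exact (hs _ (Multiset.mem_cons_self _ _)).1
        · exact hs X (Multiset.mem_cons_of_mem hX)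
      | andL₂ A B Γ' Δ =>
        refine ih (B ::ₘ Γ', Δ) (by simp) Γ ?_
        intro X hX
        rcases Multiset.mem_cons.mp hX with rfl | hX
        · exact (hs _ (Multiset.mem_cons_self _ _)).2
        · exact hs X (Multiset.mem_cons_of_mem hX)
      | andR A B Γ' =>
        exact ⟨ih (Γ', some A) (by simp) Γ hs, ih (Γ', some B) (by simp) Γ hs⟩
      | orL A B Γ' Δ =>
        rcases hs _ (Multiset.mem_cons_self _ _) with hA | hB
        · refine ih (A ::ₘ Γ', Δ) (by simp) Γ ?_
          intro X hX
          rcases Multiset.mem_cons.mp hX with rfl | hX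
          · exact hA
          · exact hs X (Multiset.mem_cons_of_mem hX)
        · refine ih (B ::ₘ Γ', Δ) (by simp) Γ ?_
          intro X hX
          rcases Multiset.mem_cons.mp hX with rfl | hX
          · exact hB
          · exact hs X (Multiset.mem_cons_of_mem hX)
      | orR₁ A B Γ' => exact Or.inl (ih (Γ', some A) (by simp) Γ hs)
      | orR₂ A B Γ' => exact Or.inr (ih (Γ', some B) (by simp) Γ hs)
      | impL A B Γ' Δ =>
        have hAB := hs _ (Multiset.mem_cons_self _ _)
        have hA : Slash Γ A := ih (Γ', some A) (by simp) Γ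
          (fun X hX => hs X (Multiset.mem_cons_of_mem hX))
        have hB : Slash Γ B := hAB.2 hA
        refine ih (B ::ₘ Γ', Δ) (by simp) Γ ?_
        intro X hX
        rcases Multiset.mem_cons.mp hX with rfl | hX
        · exact hB
        · exact hs X (Multiset.mem_cons_of_mem hX)
      | impR A B Γ' =>
        have hder : Derives R0 (A ::ₘ Γ') (some B) := hp (A ::ₘ Γ', some B) (by simp)
        have hseq : Derives R0 Γ' (some (.imp A B)) :=
          lj (LJRule.impR A B Γ') (by
            intro p hq; simp only [List.mem_singleton] at hq; subst hq; exact hder)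
        refine ⟨multicut' hseq (fun θ hθ => slash_der (hs θ hθ)), fun hA => ?_⟩
        refine ih (A ::ₘ Γ', some B) (by simp) Γ ?_
        intro X hX
        rcases Multiset.mem_cons.mp hX with rfl | hX
        · exact hA
        · exact hs X hX
    · cases hr with
      | mk Γ' A B =>
        have hder : Derives R0 (A ::ₘ Γ') (some B) := hp (A ::ₘ Γ', some B) (by simp)
        have hseq : Derives R0 (.dia A ::ₘ Γ') (some (.dia B)) :=
          Derives.step (c := ((.dia A ::ₘ Γ' : Multiset (Fml ℕ)), some (.dia B)))
            (Or.inr (Or.inl (DiaLRule.mk Γ' A B))) (by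
              intro p hq; simp only [List.mem_singleton] at hq; subst hq; exact hder)
        refine multicut' hseq ?_
        intro θ hθ
        rcases Multiset.mem_cons.mp hθ with rfl | hθ
        · exact hs _ (Multiset.mem_cons_self _ _)
        · exact slash_der (hs θ (Multiset.mem_cons_of_mem hθ))
    · obtain ⟨hps, A, σ, hAx, hc⟩ := hr
      subst hc
      rcases hAx with rfl | rfl
      · refine ⟨axTb_der (σ 0) Γ, fun hA => ?_⟩
        exact mpD (axTb_der (σ 0) Γ) (slash_der hA)
      · refine ⟨ax4b_der (σ 0) Γ, fun hA => ?_⟩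
        exact mpD (ax4b_der (σ 0) Γ) hA

end VH

/-- the sequent calculus `PLL = LJ + ◇L + (p → ◇p) + (◇◇p → ◇p)`
has the Visser–Harrop property; in particular it has the disjunction
property. -/
theorem statement_19 :
    (∀ (Γ : Multiset (Fml ℕ)), (∀ A ∈ Γ, Harrop A ∧ A.BoxFree) →
      ∀ (AB : List (Fml ℕ × Fml ℕ)), (∀ p ∈ AB, p.1.BoxFree ∧ p.2.BoxFree) →
      ∀ C D : Fml ℕ, C.BoxFree → D.BoxFree →
        Derives (BLLSys PLLAx) (Γ + imps AB) (some (.or C D)) →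
        Derives (BLLSys PLLAx) (Γ + imps AB) (some C) ∨
        Derives (BLLSys PLLAx) (Γ + imps AB) (some D) ∨
        ∃ p ∈ AB, Derives (BLLSys PLLAx) (Γ + imps AB) (some p.1)) ∧
    (∀ C D : Fml ℕ, C.BoxFree → D.BoxFree →
      Derives (BLLSys PLLAx) 0 (some (.or C D)) →
      Derives (BLLSys PLLAx) 0 (some C) ∨ Derives (BLLSys PLLAx) 0 (some D)) := by
  have main : ∀ (Γ : Multiset (Fml ℕ)), (∀ A ∈ Γ, Harrop A) →
      ∀ (AB : List (Fml ℕ × Fml ℕ)) (C D : Fml ℕ),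
        Derives (BLLSys PLLAx) (Γ + imps AB) (some (.or C D)) →
        Derives (BLLSys PLLAx) (Γ + imps AB) (some C) ∨
        Derives (BLLSys PLLAx) (Γ + imps AB) (some D) ∨
        ∃ p ∈ AB, Derives (BLLSys PLLAx) (Γ + imps AB) (some p.1) := by
    intro Γ hΓ AB C D hder
    set G : Multiset (Fml ℕ) := Γ + imps AB with hG
    by_cases h3 : ∃ p ∈ AB, Derives (BLLSys PLLAx) G (some p.1)
    · exact Or.inr (Or.inr h3)
    · have hslash : ∀ A ∈ G, VH.Slash G A := by
        intro A hA
        rcases Multiset.mem_add.mp hA with hA | hA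
        · exact VH.harrop_slash (hΓ A hA) (VH.derOf (Multiset.mem_add.mpr (Or.inl hA)))
        · rw [imps, Multiset.mem_coe, List.mem_map] at hA
          obtain ⟨p, hpAB, rfl⟩ := hA
          refine ⟨VH.derOf (Multiset.mem_add.mpr (Or.inr (by
            rw [imps, Multiset.mem_coe, List.mem_map]; exact ⟨p, hpAB, rfl⟩))), fun hA => ?_⟩
          exact absurd ⟨p, hpAB, VH.slash_der hA⟩ h3
      have := VH.slash_sound hder G hslash
      rcases this with h | h
      · exact Or.inl (VH.slash_der h)
      · exact Or.inr (Or.inl (VH.slash_der h))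
  constructor
  · intro Γ hΓ AB _ C D _ _ hder
    exact main Γ (fun A hA => (hΓ A hA).1) AB C D hder
  · intro C D _ _ hder
    have h0 : (0 : Multiset (Fml ℕ)) = (0 : Multiset (Fml ℕ)) + imps ([] : List (Fml ℕ × Fml ℕ)) := by
      simp [imps]
    rw [h0] at hder
    rcases main 0 (by simp) [] C D hder with h | h | ⟨p, hp, _⟩
    · left; rwa [← h0] at h
    · right; rwa [← h0] at h
    · exact absurd hp List.not_mem_nil

end UPT
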